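/- Let f : ℝ² → ℝ be a C² Morse function on a compact domain D (finitely many critical points, all nondegenerate, with bounded second derivatives on D). Define κ = div(∇f/|∇f|) at regular points. Then ∫_D |κ| dvol < ∞. -/

import Mathlib

open MeasureTheory Set

set_option maxHeartbeats 1000000

local notation "E2" => EuclideanSpace ℝ (Fin 2)

lemma aux_coord (v : E2) (i : Fin 2) : |v i| ≤ ‖v‖ := by
  rw [EuclideanSpace.norm_eq]
  have h1 : |v i| = √(‖v i‖ ^ 2) := by
    rw [Real.sqrt_sq_eq_abs]; simp [Real.norm_eq_abs]
  rw [h1]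
  apply Real.sqrt_le_sqrt
  exact Finset.single_le_sum (f := fun j => ‖v j‖ ^ 2) (fun j _ => sq_nonneg _)
    (Finset.mem_univ i)

lemma aux_norm_sq (v : E2) : ‖v‖ ^ 2 = ∑ i, (v i) ^ 2 := by
  rw [EuclideanSpace.norm_eq, Real.sq_sqrt (Finset.sum_nonneg fun i _ => sq_nonneg _)]
  simp [Real.norm_eq_abs, sq_abs]

lemma aux_int_abs_rpow {R : ℝ} (hR : 0 < R) :
    IntegrableOn (fun u : ℝ => |u| ^ (-(1/2) : ℝ)) (Ioo (-R) R) volume := by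
  have hpos : IntegrableOn (fun u : ℝ => |u| ^ (-(1/2) : ℝ)) (Ioo 0 R) volume :=
    ((intervalIntegral.integrableOn_Ioo_rpow_iff (s := -(1/2)) hR).2 (by norm_num)).congr_fun
      (fun x hx => by rw [abs_of_pos hx.1]) measurableSet_Ioo
  have hneg : IntegrableOn (fun u : ℝ => |u| ^ (-(1/2) : ℝ)) (Ioo (-R) 0) volume := by
    have hmp : MeasurePreserving (fun x : ℝ => -x) volume volume :=
      Measure.measurePreserving_neg volume
    have := (hmp.integrable_comp_emb (Homeomorph.neg ℝ).measurableEmbedding).2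
      ((integrable_indicator_iff measurableSet_Ioo).2 hpos)
    have heq : ((Ioo (0:ℝ) R).indicator (fun u : ℝ => |u| ^ (-(1/2) : ℝ)) ∘ fun x : ℝ => -x)
        = (Ioo (-R) (0:ℝ)).indicator (fun u : ℝ => |u| ^ (-(1/2) : ℝ)) := by
      funext x
      by_cases hx : x ∈ Ioo (-R) (0:ℝ)
      · have : -x ∈ Ioo (0:ℝ) R := by constructor <;> [linarith [hx.2]; linarith [hx.1]]
        simp only [Function.comp_apply, Set.indicator_of_mem this, Set.indicator_of_mem hx,
          abs_neg]
      · have : -x ∉ Ioo (0:ℝ) R := by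
          intro h; exact hx ⟨by linarith [h.2], by linarith [h.1]⟩
        simp only [Function.comp_apply, Set.indicator_of_notMem this,
          Set.indicator_of_notMem hx]
    rw [heq] at this
    exact (integrable_indicator_iff measurableSet_Ioo).1 this
  have hIco : IntegrableOn (fun u : ℝ => |u| ^ (-(1/2) : ℝ)) (Ico 0 R) volume :=
    hpos.congr_set_ae (Ioo_ae_eq_Ico).symm
  exact (hneg.union hIco).mono_set (fun x hx => by
    rcases lt_or_ge x 0 with h | h
    · exact Or.inl ⟨hx.1, h⟩
    · exact Or.inr ⟨h, hx.2⟩)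

lemma aux_hyperplane_null (i : Fin 2) (c : ℝ) :
    volume {x : E2 | x i = c} = 0 := by
  have hmp := EuclideanSpace.volume_preserving_symm_measurableEquiv_toLp (Fin 2)
  have hms : MeasurableSet {y : Fin 2 → ℝ | y i = c} :=
    measurableSet_eq_fun (measurable_pi_apply i) measurable_const
  have := hmp.measure_preimage hms.nullMeasurableSet
  have hpre : (MeasurableEquiv.toLp 2 (Fin 2 → ℝ)).symm ⁻¹' {y : Fin 2 → ℝ | y i = c}
      = {x : E2 | x i = c} := rfl
  rw [hpre] at this
  rw [this, MeasureTheory.volume_pi, Measure.pi_hyperplane]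

lemma aux_int_ball (p : E2) {R : ℝ} (hR : 0 < R) :
    IntegrableOn (fun x : E2 => ‖x - p‖⁻¹) (Metric.ball p R) volume := by
  set G : ℝ → ℝ := (Ioo (-R) R).indicator (fun u : ℝ => |u| ^ (-(1/2) : ℝ)) with hG
  have hGint : Integrable G volume :=
    (integrable_indicator_iff measurableSet_Ioo).2 (aux_int_abs_rpow hR)
  have hGnn : ∀ u, 0 ≤ G u :=
    fun u => Set.indicator_nonneg (fun x _ => Real.rpow_nonneg (abs_nonneg x) _) u
  -- product integrability on ℝ × ℝ
  have hF : Integrable (fun z : ℝ × ℝ => G z.1 * G z.2) volume := by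
    rw [MeasureTheory.Measure.volume_eq_prod]
    exact hGint.mul_prod hGint
  -- transfer to E2
  have hmp : MeasurePreserving
      ((MeasurableEquiv.toLp 2 (Fin 2 → ℝ)).symm.trans (MeasurableEquiv.piFinTwo fun _ => ℝ))
      volume volume :=
    (MeasureTheory.volume_preserving_piFinTwo fun _ => ℝ).comp
      (EuclideanSpace.volume_preserving_symm_measurableEquiv_toLp (Fin 2))
  have hE : Integrable (fun x : E2 => G (x 0) * G (x 1)) volume := by
    have := (hmp.integrable_comp_emb (MeasurableEquiv.measurableEmbedding _)).2 hF
    exact this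
  have htrans : Integrable (fun x : E2 => G ((x - p) 0) * G ((x - p) 1)) volume :=
    hE.comp_sub_right p
  -- conclude by domination
  have hmeas : AEStronglyMeasurable (fun x : E2 => ‖x - p‖⁻¹)
      (volume.restrict (Metric.ball p R)) :=
    (((continuous_id.sub continuous_const).norm.measurable).inv).aestronglyMeasurable
  refine Integrable.mono' htrans.integrableOn hmeas ?_
  have h0 : ∀ᵐ x : E2 ∂volume.restrict (Metric.ball p R), x 0 ≠ p 0 :=
    ae_restrict_of_ae (compl_mem_ae_iff.2 (aux_hyperplane_null 0 (p 0)))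
  have h1 : ∀ᵐ x : E2 ∂volume.restrict (Metric.ball p R), x 1 ≠ p 1 :=
    ae_restrict_of_ae (compl_mem_ae_iff.2 (aux_hyperplane_null 1 (p 1)))
  filter_upwards [ae_restrict_mem measurableSet_ball, h0, h1] with x hx hx0 hx1
  set a : ℝ := (x - p) 0 with ha
  set b : ℝ := (x - p) 1 with hb
  have hsub0 : a = x 0 - p 0 := rfl
  have hsub1 : b = x 1 - p 1 := rfl
  have hxp : ‖x - p‖ < R := by
    rw [← dist_eq_norm]; exact Metric.mem_ball.1 hx
  have haR : |a| ≤ ‖x - p‖ := ha ▸ aux_coord (x - p) 0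
  have hbR : |b| ≤ ‖x - p‖ := hb ▸ aux_coord (x - p) 1
  have ha0 : a ≠ 0 := by rw [hsub0]; exact sub_ne_zero.2 hx0
  have hb0 : b ≠ 0 := by rw [hsub1]; exact sub_ne_zero.2 hx1
  have haI : a ∈ Ioo (-R) R := abs_lt.1 (lt_of_le_of_lt haR hxp)
  have hbI : b ∈ Ioo (-R) R := abs_lt.1 (lt_of_le_of_lt hbR hxp)
  rw [hG]
  rw [Set.indicator_of_mem haI, Set.indicator_of_mem hbI]
  have hprod : |a| ^ (-(1/2) : ℝ) * |b| ^ (-(1/2) : ℝ) = (|a| * |b|) ^ (-(1/2) : ℝ) :=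
    (Real.mul_rpow (abs_nonneg a) (abs_nonneg b)).symm
  rw [hprod]
  have habpos : 0 < |a| * |b| := mul_pos (abs_pos.2 ha0) (abs_pos.2 hb0)
  have hnormpos : 0 < ‖x - p‖ := by
    have := abs_pos.2 ha0
    linarith [haR]
  have hle : |a| * |b| ≤ ‖x - p‖ ^ 2 := by
    have h2 : ‖x - p‖ ^ 2 = a ^ 2 + b ^ 2 := by
      rw [aux_norm_sq (x - p)]
      rw [Fin.sum_univ_two]
    nlinarith [abs_nonneg a, abs_nonneg b, sq_abs a, sq_abs b, sq_nonneg (|a| - |b|)]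
  have hsqrt : √(|a| * |b|) ≤ ‖x - p‖ := by
    rw [show ‖x - p‖ = √(‖x - p‖ ^ 2) from (Real.sqrt_sq hnormpos.le).symm]
    exact Real.sqrt_le_sqrt hle
  have hrw : (|a| * |b|) ^ (-(1/2) : ℝ) = (√(|a| * |b|))⁻¹ := by
    rw [Real.rpow_neg habpos.le, Real.sqrt_eq_rpow]
  rw [hrw, Real.norm_eq_abs, abs_of_nonneg (inv_nonneg.2 (norm_nonneg _))]
  exact inv_anti₀ (Real.sqrt_pos.2 habpos) hsqrt


theorem integrableOn_curvature_of_morse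
    (f : EuclideanSpace ℝ (Fin 2) → ℝ) (D U : Set (EuclideanSpace ℝ (Fin 2)))
    (hD : IsCompact D) (hUopen : IsOpen U) (hDU : D ⊆ U)
    (hf : ContDiffOn ℝ 2 f U)
    (hfin : {x ∈ D | gradient f x = 0}.Finite)
    (hnondeg : ∀ x ∈ D, gradient f x = 0 →
      ∃ H : EuclideanSpace ℝ (Fin 2) ≃L[ℝ] EuclideanSpace ℝ (Fin 2),
        (H : EuclideanSpace ℝ (Fin 2) →L[ℝ] EuclideanSpace ℝ (Fin 2)) =
          fderiv ℝ (fun y => gradient f y) x) :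
    IntegrableOn
      (fun x =>
        (‖gradient f x‖ ^ 2 *
            (∑ i : Fin 2,
              fderiv ℝ (fun y => gradient f y) x (EuclideanSpace.single i 1) i) -
          inner ℝ (fderiv ℝ (fun y => gradient f y) x (gradient f x))
            (gradient f x)) / ‖gradient f x‖ ^ 3)
      D volume := by
  classical
  -- notation
  set g : E2 → E2 := fun y => gradient f y with hgdef
  set A : E2 → (E2 →L[ℝ] E2) := fun x => fderiv ℝ (fun y => gradient f y) x with hAdef
  set Φ : E2 → ℝ := fun x =>
    (‖gradient f x‖ ^ 2 *
        (∑ i : Fin 2,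
          fderiv ℝ (fun y => gradient f y) x (EuclideanSpace.single i 1) i) -
      inner ℝ (fderiv ℝ (fun y => gradient f y) x (gradient f x))
        (gradient f x)) / ‖gradient f x‖ ^ 3 with hΦdef
  have hΦ : ∀ x, Φ x =
      (‖g x‖ ^ 2 * (∑ i : Fin 2, A x (EuclideanSpace.single i 1) i) -
        (inner ℝ (A x (g x)) (g x) : ℝ)) / ‖g x‖ ^ 3 := fun x => rfl
  -- the dual equivalence as a genuine ℝ-CLM
  set e : StrongDual ℝ E2 →L[ℝ] E2 :=
    { toFun := fun L => (InnerProductSpace.toDual ℝ E2).symm L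
      map_add' := fun L₁ L₂ => map_add _ _ _
      map_smul' := fun c L => by
        simp [LinearIsometryEquiv.map_smulₛₗ, starRingEnd_apply] } with hedef
  have hgeq : g = fun x => e (fderiv ℝ f x) := rfl
  have hAg : A = fun x => fderiv ℝ g x := rfl
  have hgx : ∀ x, g x = gradient f x := fun _ => rfl
  clear_value g A Φ e
  -- smoothness of the gradient
  have hgrad1 : ContDiffOn ℝ 1 g U := by
    have h1 : ContDiffOn ℝ 1 (fderiv ℝ f) U :=
      hf.fderiv_of_isOpen hUopen (by norm_num)
    rw [hgeq]
    exact e.contDiff.comp_contDiffOn h1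
  have hAcont : ContinuousOn A U := by
    have := hgrad1.continuousOn_fderiv_of_isOpen hUopen le_rfl
    rw [hAg]
    exact this
  -- measurability
  have hg_meas : Measurable g := by
    rw [hgeq]
    exact e.continuous.measurable.comp (measurable_fderiv ℝ f)
  have hA_meas : Measurable A := by rw [hAg]; exact measurable_fderiv ℝ g
  have m1 : Measurable (fun x => ‖g x‖) := hg_meas.norm
  have m2 : Measurable (fun x => ∑ i : Fin 2, A x (EuclideanSpace.single i 1) i) := by
    apply Finset.measurable_sum
    intro i _
    have hc : Continuous fun L : E2 →L[ℝ] E2 => L (EuclideanSpace.single i 1) i := by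
      have h1 := (ContinuousLinearMap.apply ℝ E2 (EuclideanSpace.single i (1:ℝ))).continuous
      exact (EuclideanSpace.proj i).continuous.comp h1
    exact hc.measurable.comp hA_meas
  have m3 : Measurable (fun x => (inner ℝ (A x (g x)) (g x) : ℝ)) := by
    have hpair : Measurable fun x => (A x) (g x) := by
      have hc : Continuous fun q : (E2 →L[ℝ] E2) × E2 => q.1 q.2 :=
        isBoundedBilinearMap_apply.continuous
      exact hc.measurable.comp (hA_meas.prodMk hg_meas)
    have hc : Continuous fun q : E2 × E2 => inner ℝ q.1 q.2 := continuous_inner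
    exact hc.measurable.comp (hpair.prodMk hg_meas)
  have hκ_meas : Measurable Φ := by
    rw [funext hΦ]
    exact (((m1.pow_const 2).mul m2).sub m3).div (m1.pow_const 3)
  -- pointwise bound
  have key : ∀ x, |Φ x| ≤ 3 * ‖A x‖ / ‖g x‖ := by
    intro x
    by_cases h0 : g x = 0
    · rw [hΦ x, h0]
      simp
    · have hgpos : 0 < ‖g x‖ := norm_pos_iff.2 h0
      have htr : |∑ i : Fin 2, A x (EuclideanSpace.single i 1) i| ≤ 2 * ‖A x‖ := by
        calc |∑ i : Fin 2, A x (EuclideanSpace.single i 1) i|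
            ≤ ∑ i : Fin 2, |A x (EuclideanSpace.single i 1) i| :=
              Finset.abs_sum_le_sum_abs _ _
          _ ≤ ∑ _i : Fin 2, ‖A x‖ := by
              refine Finset.sum_le_sum fun i _ => ?_
              refine (aux_coord _ i).trans ?_
              have := (A x).le_opNorm (EuclideanSpace.single i (1:ℝ))
              rwa [EuclideanSpace.norm_single, norm_one, mul_one] at this
          _ = 2 * ‖A x‖ := by simp [Finset.sum_const, two_mul]
      have hinner : |(inner ℝ (A x (g x)) (g x) : ℝ)| ≤ ‖A x‖ * ‖g x‖ ^ 2 := by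
        calc |(inner ℝ (A x (g x)) (g x) : ℝ)| ≤ ‖A x (g x)‖ * ‖g x‖ :=
              abs_real_inner_le_norm _ _
          _ ≤ (‖A x‖ * ‖g x‖) * ‖g x‖ := by
              have := (A x).le_opNorm (g x)
              nlinarith [norm_nonneg (g x)]
          _ = ‖A x‖ * ‖g x‖ ^ 2 := by ring
      have hnum : |‖g x‖ ^ 2 * (∑ i : Fin 2, A x (EuclideanSpace.single i 1) i) -
          (inner ℝ (A x (g x)) (g x) : ℝ)| ≤ 3 * ‖A x‖ * ‖g x‖ ^ 2 := by
        have h1 : |‖g x‖ ^ 2 * (∑ i : Fin 2, A x (EuclideanSpace.single i 1) i)|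
            ≤ 2 * ‖A x‖ * ‖g x‖ ^ 2 := by
          rw [abs_mul, abs_of_nonneg (sq_nonneg ‖g x‖)]
          nlinarith [sq_nonneg ‖g x‖]
        calc |‖g x‖ ^ 2 * (∑ i : Fin 2, A x (EuclideanSpace.single i 1) i) -
            (inner ℝ (A x (g x)) (g x) : ℝ)|
            ≤ |‖g x‖ ^ 2 * (∑ i : Fin 2, A x (EuclideanSpace.single i 1) i)| +
              |(inner ℝ (A x (g x)) (g x) : ℝ)| := abs_sub _ _
          _ ≤ 3 * ‖A x‖ * ‖g x‖ ^ 2 := by linarith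
      calc |Φ x| = |‖g x‖ ^ 2 * (∑ i : Fin 2, A x (EuclideanSpace.single i 1) i) -
            (inner ℝ (A x (g x)) (g x) : ℝ)| / ‖g x‖ ^ 3 := by
              rw [hΦ x, abs_div, abs_of_pos (pow_pos hgpos 3)]
        _ ≤ (3 * ‖A x‖ * ‖g x‖ ^ 2) / ‖g x‖ ^ 3 := by
              gcongr
        _ = 3 * ‖A x‖ / ‖g x‖ := by
              field_simp
  -- integrability near each critical point
  have hball : ∀ p ∈ {x ∈ D | gradient f x = 0}, ∃ r, 0 < r ∧
      IntegrableOn Φ (Metric.ball p r) volume := by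
    rintro p ⟨hpD, hp0⟩
    obtain ⟨H, hH⟩ := hnondeg p hpD hp0
    set Hs : E2 →L[ℝ] E2 := (H.symm : E2 →L[ℝ] E2) with hHs
    have hHsv : ∀ v, Hs ((H : E2 →L[ℝ] E2) v) = v := fun v => H.symm_apply_apply v
    clear_value Hs
    have hHspos : 0 < ‖Hs‖ := by
      rw [norm_pos_iff]
      intro hzero
      have hv : (EuclideanSpace.single 0 (1:ℝ) : E2) ≠ 0 := by
        intro hv0
        have := congrArg norm hv0
        rw [EuclideanSpace.norm_single, norm_one, norm_zero] at this
        norm_num at this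
      apply hv
      have h1 := hHsv (EuclideanSpace.single 0 (1:ℝ))
      rw [hzero] at h1
      simpa using h1.symm
    set c : ℝ := (2 * ‖Hs‖)⁻¹ with hc
    clear_value c
    have hcpos : 0 < c := by rw [hc]; positivity
    have hdiff : DifferentiableAt ℝ g p :=
      (hgrad1.differentiableOn one_ne_zero).differentiableAt (hUopen.mem_nhds (hDU hpD))
    have hfd : HasFDerivAt g ((H : E2 →L[ℝ] E2)) p := by
      rw [hH]
      exact hdiff.hasFDerivAt
    have hlo := hfd.isLittleO.def hcpos
    have hAb : ∀ᶠ x in nhds p, ‖A x‖ ≤ ‖A p‖ + 1 := by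
      have hcA : ContinuousAt A p := hAcont.continuousAt (hUopen.mem_nhds (hDU hpD))
      exact hcA.norm.eventually (eventually_le_nhds (lt_add_one ‖A p‖))
    have hkey : ∀ᶠ x in nhds p, ‖x - p‖ ≤ 2 * ‖Hs‖ * ‖g x‖ := by
      filter_upwards [hlo] with x hx
      have hgp : g p = 0 := by rw [hgx]; exact hp0
      have h1 : ‖g x - (H : E2 →L[ℝ] E2) (x - p)‖ ≤ c * ‖x - p‖ := by
        simpa [hgp] using hx
      have h2 : ‖x - p‖ ≤ ‖Hs‖ * ‖(H : E2 →L[ℝ] E2) (x - p)‖ := by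
        have heq : Hs ((H : E2 →L[ℝ] E2) (x - p)) = x - p := hHsv (x - p)
        calc ‖x - p‖ = ‖Hs ((H : E2 →L[ℝ] E2) (x - p))‖ := by rw [heq]
          _ ≤ ‖Hs‖ * ‖(H : E2 →L[ℝ] E2) (x - p)‖ := Hs.le_opNorm _
      have h3 : ‖(H : E2 →L[ℝ] E2) (x - p)‖ ≤ ‖g x‖ + c * ‖x - p‖ := by
        have h4 : ‖(H : E2 →L[ℝ] E2) (x - p)‖ - ‖g x‖ ≤
            ‖g x - (H : E2 →L[ℝ] E2) (x - p)‖ := by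
          have := norm_sub_norm_le ((H : E2 →L[ℝ] E2) (x - p)) (g x)
          rw [← norm_neg ((H : E2 →L[ℝ] E2) (x - p) - g x), neg_sub] at this
          linarith
        linarith
      have hc2 : ‖Hs‖ * c = 1/2 := by
        rw [hc]
        field_simp
      have h5 : ‖x - p‖ ≤ ‖Hs‖ * ‖g x‖ + ‖Hs‖ * c * ‖x - p‖ := by
        calc ‖x - p‖ ≤ ‖Hs‖ * ‖(H : E2 →L[ℝ] E2) (x - p)‖ := h2
          _ ≤ ‖Hs‖ * (‖g x‖ + c * ‖x - p‖) :=
              mul_le_mul_of_nonneg_left h3 (le_of_lt hHspos)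
          _ = ‖Hs‖ * ‖g x‖ + ‖Hs‖ * c * ‖x - p‖ := by ring
      rw [hc2] at h5
      linarith
    obtain ⟨r, hr, hrprop⟩ := Metric.eventually_nhds_iff_ball.1
      ((hAb.and hkey))
    refine ⟨r, hr, ?_⟩
    have hint := (aux_int_ball p hr).const_mul (3 * (‖A p‖ + 1) * (2 * ‖Hs‖))
    refine Integrable.mono' hint hκ_meas.aestronglyMeasurable.restrict ?_
    filter_upwards [ae_restrict_mem measurableSet_ball] with x hx
    obtain ⟨hxA, hxkey⟩ := hrprop x hx
    rw [Real.norm_eq_abs]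
    by_cases h0 : g x = 0
    · calc |Φ x| ≤ 3 * ‖A x‖ / ‖g x‖ := key x
        _ = 0 := by simp [h0]
        _ ≤ 3 * (‖A p‖ + 1) * (2 * ‖Hs‖) * ‖x - p‖⁻¹ := by positivity
    · have hgpos : 0 < ‖g x‖ := norm_pos_iff.2 h0
      have hxp : 0 < ‖x - p‖ := by
        rw [norm_pos_iff, sub_ne_zero]
        intro hxe
        exact h0 (by rw [hxe, hgx]; exact hp0)
      calc |Φ x| ≤ 3 * ‖A x‖ / ‖g x‖ := key x
        _ ≤ 3 * (‖A p‖ + 1) / ‖g x‖ := by gcongr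
        _ = 3 * (‖A p‖ + 1) * (2 * ‖Hs‖) / (2 * ‖Hs‖ * ‖g x‖) := by
            rw [div_eq_div_iff (ne_of_gt hgpos) (by positivity)]
            ring
        _ ≤ 3 * (‖A p‖ + 1) * (2 * ‖Hs‖) / ‖x - p‖ :=
            div_le_div_of_nonneg_left (by positivity) hxp hxkey
        _ = 3 * (‖A p‖ + 1) * (2 * ‖Hs‖) * ‖x - p‖⁻¹ := div_eq_mul_inv _ _
  choose! r hr0 hrint using hball
  set T : Set E2 := ⋃ p ∈ {x ∈ D | gradient f x = 0}, Metric.ball p (r p) with hT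
  have hTopen : IsOpen T := isOpen_biUnion fun p _ => Metric.isOpen_ball
  have hTint : IntegrableOn Φ T volume :=
    (integrableOn_finite_biUnion hfin).2 hrint
  set K : Set E2 := D \ T with hK
  have hKcomp : IsCompact K := hD.diff hTopen
  have hKD : K ⊆ D := diff_subset
  have hKU : K ⊆ U := hKD.trans hDU
  have hKg : ∀ x ∈ K, g x ≠ 0 := by
    intro x hx h0
    rw [hgx] at h0
    exact hx.2 (mem_biUnion (show x ∈ {x ∈ D | gradient f x = 0} from ⟨hx.1, h0⟩)
      (Metric.mem_ball_self (hr0 x ⟨hx.1, h0⟩)))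
  have hKint : IntegrableOn Φ K volume := by
    rcases K.eq_empty_or_nonempty with hKe | hKne
    · rw [hKe]; exact integrableOn_empty
    · obtain ⟨x₀, hx₀K, hmin⟩ := hKcomp.exists_isMinOn hKne
        ((hgrad1.continuousOn.mono hKU).norm)
      have hδ : 0 < ‖g x₀‖ := norm_pos_iff.2 (hKg x₀ hx₀K)
      obtain ⟨M, hM⟩ := hD.exists_bound_of_continuousOn (hAcont.mono hDU)
      have hM0 : 0 ≤ M := le_trans (norm_nonneg _) (hM x₀ (hKD hx₀K))
      apply Measure.integrableOn_of_bounded (M := 3 * M / ‖g x₀‖)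
        hKcomp.measure_lt_top.ne hκ_meas.aestronglyMeasurable
      filter_upwards [ae_restrict_mem hKcomp.measurableSet] with x hx
      rw [Real.norm_eq_abs]
      calc |Φ x| ≤ 3 * ‖A x‖ / ‖g x‖ := key x
        _ ≤ 3 * M / ‖g x₀‖ := by
            gcongr
            · exact hM x (hKD hx)
            · exact hmin hx
  have hcover : D ⊆ K ∪ T := fun x hx =>
    (em (x ∈ T)).elim Or.inr (fun h => Or.inl ⟨hx, h⟩)
  exact (hKint.union hTint).mono_set hcover
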